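/- Let A be the ℂ-algebra presented by generators a, b, c, d and relations da = ad, db = q²bd, dc = q^{-2}cd, ba = ab + q^{-1}q̂·bd, cb = bc + q^{-1}q̂·(da − d²), ca = ac − q^{-1}q̂·dc, ad − q²bc = 1, b^p = c^p = 0, d^{2p} = 1. Then the monomials b^i c^j d^k (0 ≤ i,j ≤ p−1, 0 ≤ k ≤ 2p−1) form a basis of A (so dim A = 2p³), and the assignment a ↦ K + q^{-1}q̂²FE, b ↦ q^{-1}q̂F, c ↦ q̂K^{-1}E, d ↦ K^{-1} defines an isomorphism of ℂ-algebras A → Ūq (this is the presentation of the loop algebra L_{0,1}(Ūq) ≅ Ūq). -/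

import Mathlib

/- STATEMENT 16: the algebra `A` presented by generators `a,b,c,d` and the listed
relations has the monomials `bⁱcʲdᵏ` as a basis (so `dim A = 2p³`), and
`a ↦ K + q⁻¹q̂²FE, b ↦ q⁻¹q̂F, c ↦ q̂K⁻¹E, d ↦ K⁻¹` defines an isomorphism `A ≅ Ū_q`. -/

noncomputable section

open scoped TensorProduct

/-- `q = exp(iπ/p)`. -/
def qval (p : ℕ) : ℂ := Complex.exp ((Real.pi : ℂ) * Complex.I / p)

/-- the fixed square root `q^{1/2} = exp(iπ/2p)`. -/
def q2val (p : ℕ) : ℂ := Complex.exp ((Real.pi : ℂ) * Complex.I / (2 * p))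

/-- the quantum integer `[n] = (qⁿ - q⁻ⁿ)/(q - q⁻¹)`. -/
def qint (q : ℂ) (n : ℕ) : ℂ := (q ^ n - q⁻¹ ^ n) / (q - q⁻¹)

/-- the quantum factorial `[n]! = [1][2]⋯[n]`. -/
def qfact (q : ℂ) : ℕ → ℂ
  | 0 => 1
  | n + 1 => qfact q n * qint q (n + 1)

/-- Symmetric linear forms on `U`. -/
def IsSLF {U : Type} [Ring U] [Algebra ℂ U] (φ : Module.Dual ℂ U) : Prop :=
  ∀ x y : U, φ (x * y) = φ (y * x)

/-- The subspace of symmetric linear forms on `U`. -/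
def SLFsub (U : Type) [Ring U] [Algebra ℂ U] : Submodule ℂ (Module.Dual ℂ U) where
  carrier := {φ | ∀ x y : U, φ (x * y) = φ (y * x)}
  add_mem' := by
    intro a b ha hb x y
    simp only [LinearMap.add_apply, ha x y, hb x y]
  zero_mem' := by intro x y; simp
  smul_mem' := by
    intro c a ha x y
    simp only [LinearMap.smul_apply, ha x y]

/-- The defining relations of the restricted quantum group `Ū_q(sl₂)`,
for an algebra `U` with elements `E`, `F`, `K` and `Ki = K⁻¹`. -/
structure UqRel (p : ℕ) {U : Type} [Ring U] [Algebra ℂ U] (E F K Ki : U) : Prop where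
  hEp : E ^ p = 0
  hFp : F ^ p = 0
  hK2p : K ^ (2 * p) = 1
  hKKi : K * Ki = 1
  hKiK : Ki * K = 1
  hKE : K * E = (qval p) ^ 2 • (E * K)
  hKF : K * F = ((qval p)⁻¹) ^ 2 • (F * K)
  hEF : E * F - F * E = (qval p - (qval p)⁻¹)⁻¹ • (K - Ki)

/-- The action of `x ∈ U` on a `U`-module `V` as a `ℂ`-linear endomorphism. -/
def actHom (U V : Type) [Ring U] [Algebra ℂ U] [AddCommGroup V] [Module ℂ V]
    [Module U V] [IsScalarTower ℂ U V] [SMulCommClass ℂ U V] :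
    U →ₗ[ℂ] (V →ₗ[ℂ] V) where
  toFun x :=
    { toFun := fun m => x • m
      map_add' := fun a b => smul_add x a b
      map_smul' := fun c m => (smul_comm c x m).symm }
  map_add' x y := by ext m; exact add_smul x y m
  map_smul' c x := by ext m; exact smul_assoc c x m

/-- The character of a finite-dimensional `U`-module `V`. -/
def chiOf (U V : Type) [Ring U] [Algebra ℂ U] [AddCommGroup V] [Module ℂ V]
    [Module U V] [IsScalarTower ℂ U V] [SMulCommClass ℂ U V] : Module.Dual ℂ U :=
  LinearMap.trace ℂ V ∘ₗ actHom U V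

/-- `V` together with the basis `B` is the simple module `X^α(s)`:
`K vᵢ = α q^{s-1-2i} vᵢ`, `E v₀ = 0`, `E vᵢ = α[i][s-i] v_{i-1}`,
`F vᵢ = v_{i+1}`, `F v_{s-1} = 0`. -/
structure IsXModule (q : ℂ) {U : Type} [Ring U] [Algebra ℂ U] (E F K : U)
    (α : ℂ) (s : ℕ) {V : Type} [AddCommGroup V] [Module ℂ V] [Module U V]
    (B : Fin s → V) : Prop where
  hK : ∀ i : Fin s, K • B i = (α * q ^ ((s : ℤ) - 1 - 2 * ((i : ℕ) : ℤ))) • B i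
  hE0 : ∀ i : Fin s, (i : ℕ) = 0 → E • B i = 0
  hE : ∀ i : Fin s, 0 < (i : ℕ) → E • B i
      = (α * qint q i * qint q (s - i)) •
          B ⟨(i : ℕ) - 1, lt_of_le_of_lt (Nat.pred_le _) i.isLt⟩
  hF : ∀ (i : Fin s) (h : (i : ℕ) + 1 < s), F • B i = B ⟨(i : ℕ) + 1, h⟩
  hFtop : ∀ i : Fin s, (i : ℕ) = s - 1 → F • B i = 0

/-- Index type for the standard basis `(bᵢ, xⱼ, y_k, a_l)` of the PIM `P^α(s)`. -/
abbrev PIdx (p s : ℕ) : Type := (Fin s ⊕ Fin (p - s)) ⊕ (Fin (p - s) ⊕ Fin s)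

def ib {p s : ℕ} (i : Fin s) : PIdx p s := Sum.inl (Sum.inl i)
def ix {p s : ℕ} (j : Fin (p - s)) : PIdx p s := Sum.inl (Sum.inr j)
def iy {p s : ℕ} (k : Fin (p - s)) : PIdx p s := Sum.inr (Sum.inl k)
def ia {p s : ℕ} (l : Fin s) : PIdx p s := Sum.inr (Sum.inr l)

/-- `V` together with the basis `B` (indexed by `PIdx p s`) is the projective
indecomposable module `P^α(s)` with its standard action. -/
structure IsPModule (q : ℂ) (p : ℕ) {U : Type} [Ring U] [Algebra ℂ U] (E F K : U)
    (α : ℂ) (s : ℕ) (hs : 0 < s) (hsp : s < p)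
    {V : Type} [AddCommGroup V] [Module ℂ V] [Module U V]
    (B : PIdx p s → V) : Prop where
  hKb : ∀ i : Fin s, K • B (ib i)
      = (α * q ^ ((s : ℤ) - 1 - 2 * ((i : ℕ) : ℤ))) • B (ib i)
  hKx : ∀ j : Fin (p - s), K • B (ix j)
      = (-α * q ^ ((p : ℤ) - s - 1 - 2 * ((j : ℕ) : ℤ))) • B (ix j)
  hKy : ∀ k : Fin (p - s), K • B (iy k)
      = (-α * q ^ ((p : ℤ) - s - 1 - 2 * ((k : ℕ) : ℤ))) • B (iy k)
  hKa : ∀ l : Fin s, K • B (ia l)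
      = (α * q ^ ((s : ℤ) - 1 - 2 * ((l : ℕ) : ℤ))) • B (ia l)
  hEb0 : E • B (ib ⟨0, hs⟩)
      = B (ix ⟨p - s - 1, Nat.sub_lt (Nat.sub_pos_of_lt hsp) one_pos⟩)
  hEb : ∀ i : Fin s, 0 < (i : ℕ) → E • B (ib i)
      = (α * qint q i * qint q (s - i)) •
          B (ib ⟨(i : ℕ) - 1, lt_of_le_of_lt (Nat.pred_le _) i.isLt⟩)
        + B (ia ⟨(i : ℕ) - 1, lt_of_le_of_lt (Nat.pred_le _) i.isLt⟩)
  hEx0 : ∀ j : Fin (p - s), (j : ℕ) = 0 → E • B (ix j) = 0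
  hEx : ∀ j : Fin (p - s), 0 < (j : ℕ) → E • B (ix j)
      = (-α * qint q j * qint q (p - s - j)) •
          B (ix ⟨(j : ℕ) - 1, lt_of_le_of_lt (Nat.pred_le _) j.isLt⟩)
  hEy0 : E • B (iy ⟨0, Nat.sub_pos_of_lt hsp⟩)
      = B (ia ⟨s - 1, Nat.sub_lt hs one_pos⟩)
  hEy : ∀ k : Fin (p - s), 0 < (k : ℕ) → E • B (iy k)
      = (-α * qint q k * qint q (p - s - k)) •
          B (iy ⟨(k : ℕ) - 1, lt_of_le_of_lt (Nat.pred_le _) k.isLt⟩)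
  hEa0 : ∀ l : Fin s, (l : ℕ) = 0 → E • B (ia l) = 0
  hEa : ∀ l : Fin s, 0 < (l : ℕ) → E • B (ia l)
      = (α * qint q l * qint q (s - l)) •
          B (ia ⟨(l : ℕ) - 1, lt_of_le_of_lt (Nat.pred_le _) l.isLt⟩)
  hFb : ∀ (i : Fin s) (h : (i : ℕ) + 1 < s), F • B (ib i) = B (ib ⟨(i : ℕ) + 1, h⟩)
  hFbtop : F • B (ib ⟨s - 1, Nat.sub_lt hs one_pos⟩)
      = B (iy ⟨0, Nat.sub_pos_of_lt hsp⟩)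
  hFx : ∀ (j : Fin (p - s)) (h : (j : ℕ) + 1 < p - s), F • B (ix j) = B (ix ⟨(j : ℕ) + 1, h⟩)
  hFxtop : F • B (ix ⟨p - s - 1, Nat.sub_lt (Nat.sub_pos_of_lt hsp) one_pos⟩)
      = B (ia ⟨0, hs⟩)
  hFy : ∀ (k : Fin (p - s)) (h : (k : ℕ) + 1 < p - s), F • B (iy k) = B (iy ⟨(k : ℕ) + 1, h⟩)
  hFytop : F • B (iy ⟨p - s - 1, Nat.sub_lt (Nat.sub_pos_of_lt hsp) one_pos⟩) = 0
  hFa : ∀ (l : Fin s) (h : (l : ℕ) + 1 < s), F • B (ia l) = B (ia ⟨(l : ℕ) + 1, h⟩)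
  hFatop : F • B (ia ⟨s - 1, Nat.sub_lt hs one_pos⟩) = 0

/-- The trace of the bottom-left `s×s` block `H^α_s(x)` of the matrix of `x`
on `P^α(s)` in a standard basis: `Σ_l (coefficient of a_l in x·b_l)`. -/
def blockTr (p s : ℕ) (U : Type) [Ring U] [Algebra ℂ U]
    (V : Type) [AddCommGroup V] [Module ℂ V] [Module U V]
    [IsScalarTower ℂ U V] [SMulCommClass ℂ U V]
    (B : Module.Basis (PIdx p s) ℂ V) : Module.Dual ℂ U :=
  ∑ l : Fin s, B.coord (ia l) ∘ₗ (actHom U V).flip (B (ib l))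

/-- The defining relations of the presented algebra `A ≅ L_{0,1}(Ū_q)`,
on the free algebra on generators `a = ι 0`, `b = ι 1`, `c = ι 2`, `d = ι 3`. -/
inductive LoopRel (p : ℕ) : FreeAlgebra ℂ (Fin 4) → FreeAlgebra ℂ (Fin 4) → Prop
  | da : LoopRel p (FreeAlgebra.ι ℂ 3 * FreeAlgebra.ι ℂ 0)
      (FreeAlgebra.ι ℂ 0 * FreeAlgebra.ι ℂ 3)
  | db : LoopRel p (FreeAlgebra.ι ℂ 3 * FreeAlgebra.ι ℂ 1)
      ((qval p) ^ 2 • (FreeAlgebra.ι ℂ 1 * FreeAlgebra.ι ℂ 3))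
  | dc : LoopRel p (FreeAlgebra.ι ℂ 3 * FreeAlgebra.ι ℂ 2)
      (((qval p)⁻¹) ^ 2 • (FreeAlgebra.ι ℂ 2 * FreeAlgebra.ι ℂ 3))
  | ba : LoopRel p (FreeAlgebra.ι ℂ 1 * FreeAlgebra.ι ℂ 0)
      (FreeAlgebra.ι ℂ 0 * FreeAlgebra.ι ℂ 1
        + ((qval p)⁻¹ * (qval p - (qval p)⁻¹)) • (FreeAlgebra.ι ℂ 1 * FreeAlgebra.ι ℂ 3))
  | cb : LoopRel p (FreeAlgebra.ι ℂ 2 * FreeAlgebra.ι ℂ 1)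
      (FreeAlgebra.ι ℂ 1 * FreeAlgebra.ι ℂ 2
        + ((qval p)⁻¹ * (qval p - (qval p)⁻¹)) •
            (FreeAlgebra.ι ℂ 3 * FreeAlgebra.ι ℂ 0 - FreeAlgebra.ι ℂ 3 * FreeAlgebra.ι ℂ 3))
  | ca : LoopRel p (FreeAlgebra.ι ℂ 2 * FreeAlgebra.ι ℂ 0)
      (FreeAlgebra.ι ℂ 0 * FreeAlgebra.ι ℂ 2
        - ((qval p)⁻¹ * (qval p - (qval p)⁻¹)) • (FreeAlgebra.ι ℂ 3 * FreeAlgebra.ι ℂ 2))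
  | det : LoopRel p (FreeAlgebra.ι ℂ 0 * FreeAlgebra.ι ℂ 3
      - (qval p) ^ 2 • (FreeAlgebra.ι ℂ 1 * FreeAlgebra.ι ℂ 2)) 1
  | bp : LoopRel p (FreeAlgebra.ι ℂ 1 ^ p) 0
  | cp : LoopRel p (FreeAlgebra.ι ℂ 2 ^ p) 0
  | d2p : LoopRel p (FreeAlgebra.ι ℂ 3 ^ (2 * p)) 1

/-- The presented algebra `A`. -/
abbrev LoopAlg (p : ℕ) : Type := RingQuot (LoopRel p)

def genA (p : ℕ) : LoopAlg p := RingQuot.mkAlgHom ℂ (LoopRel p) (FreeAlgebra.ι ℂ 0)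
def genB (p : ℕ) : LoopAlg p := RingQuot.mkAlgHom ℂ (LoopRel p) (FreeAlgebra.ι ℂ 1)
def genC (p : ℕ) : LoopAlg p := RingQuot.mkAlgHom ℂ (LoopRel p) (FreeAlgebra.ι ℂ 2)
def genD (p : ℕ) : LoopAlg p := RingQuot.mkAlgHom ℂ (LoopRel p) (FreeAlgebra.ι ℂ 3)



set_option linter.unusedSectionVars false
set_option maxHeartbeats 1000000

lemma qval_ne_zero (p : ℕ) : qval p ≠ 0 := Complex.exp_ne_zero _

lemma qval_sq_ne_one {p : ℕ} (hp : 2 ≤ p) : (qval p) ^ 2 ≠ 1 := by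
  have hp0 : (p : ℂ) ≠ 0 := by exact_mod_cast (by omega : p ≠ 0)
  intro h
  rw [qval, ← Complex.exp_nat_mul, Complex.exp_eq_one_iff] at h
  obtain ⟨n, hn⟩ := h
  have hπ : (Real.pi : ℂ) ≠ 0 := by exact_mod_cast Real.pi_ne_zero
  have hI : Complex.I ≠ 0 := Complex.I_ne_zero
  push_cast at hn
  field_simp at hn
  have h2πI : (2 : ℂ) * Real.pi * Complex.I ≠ 0 :=
    mul_ne_zero (mul_ne_zero two_ne_zero hπ) hI
  have key : (n : ℂ) * p * (2 * Real.pi * Complex.I) = 1 * (2 * Real.pi * Complex.I) := by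
    linear_combination (-2 * (Real.pi : ℂ) * Complex.I) * hn
  have key2 : ((n * p : ℤ) : ℂ) = 1 := by push_cast; exact mul_right_cancel₀ h2πI key
  have : (n * p : ℤ) = 1 := by exact_mod_cast key2
  have : (p : ℤ) ∣ 1 := ⟨n, by linarith [this]⟩
  have := Int.le_of_dvd one_pos this
  omega

lemma qhat_ne_zero {p : ℕ} (hp : 2 ≤ p) : qval p - (qval p)⁻¹ ≠ 0 := by
  intro h
  apply qval_sq_ne_one hp
  have h0 := qval_ne_zero p
  rw [sub_eq_zero] at h
  rw [sq]
  nth_rewrite 2 [h]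
  field_simp

section U
variable {U : Type} [Ring U] [Algebra ℂ U]
variable (E F K Ki : U)
variable (q qh : ℂ) (hq : q ≠ 0) (hqh : qh ≠ 0) (hqq : qh = q - q⁻¹)
variable (hKKi : K * Ki = 1) (hKiK : Ki * K = 1)
variable (hKE : K * E = q ^ 2 • (E * K))
variable (hKF : K * F = (q⁻¹) ^ 2 • (F * K))
variable (hEF : E * F - F * E = qh⁻¹ • (K - Ki))

include hq hKE hKKi hKiK in
lemma uEKi : E * Ki = q ^ 2 • (Ki * E) := by
  have h1 : E * Ki = Ki * (K * E) * Ki := by rw [← mul_assoc, hKiK, one_mul]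
  rw [h1, hKE, mul_smul_comm, smul_mul_assoc, mul_assoc, mul_assoc, hKKi, mul_one]

include hq hKE hKKi hKiK in
lemma uKiE : Ki * E = (q⁻¹) ^ 2 • (E * Ki) := by
  rw [uEKi E K Ki q hq hKKi hKiK hKE, smul_smul, inv_pow,
    inv_mul_cancel₀ (pow_ne_zero 2 hq), one_smul]

include hq hKF hKKi hKiK in
lemma uFKi : F * Ki = (q⁻¹) ^ 2 • (Ki * F) := by
  have h1 : F * Ki = Ki * (K * F) * Ki := by rw [← mul_assoc, hKiK, one_mul]
  rw [h1, hKF, mul_smul_comm, smul_mul_assoc, mul_assoc, mul_assoc, hKKi, mul_one]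

include hq hKF hKKi hKiK in
lemma uKiF : Ki * F = q ^ 2 • (F * Ki) := by
  rw [uFKi F K Ki q hq hKKi hKiK hKF, smul_smul, inv_pow,
    mul_inv_cancel₀ (pow_ne_zero 2 hq), one_smul]

include hEF in
lemma uEFe : E * F = F * E + qh⁻¹ • K - qh⁻¹ • Ki := by
  rw [smul_sub] at hEF
  have := sub_eq_iff_eq_add.mp hEF
  rw [this]; abel

-- lifted versions
include hq hKE hKKi hKiK in
lemma uKiEz (z : U) : Ki * (E * z) = (q⁻¹) ^ 2 • (E * (Ki * z)) := by
  rw [← mul_assoc, uKiE E K Ki q hq hKKi hKiK hKE, smul_mul_assoc, mul_assoc]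

include hq hKF hKKi hKiK in
lemma uKiFz (z : U) : Ki * (F * z) = q ^ 2 • (F * (Ki * z)) := by
  rw [← mul_assoc, uKiF F K Ki q hq hKKi hKiK hKF, smul_mul_assoc, mul_assoc]

include hKE in
lemma uKEz (z : U) : K * (E * z) = q ^ 2 • (E * (K * z)) := by
  rw [← mul_assoc, hKE, smul_mul_assoc, mul_assoc]

include hKF in
lemma uKFz (z : U) : K * (F * z) = (q⁻¹) ^ 2 • (F * (K * z)) := by
  rw [← mul_assoc, hKF, smul_mul_assoc, mul_assoc]

include hEF in
lemma uEFz (z : U) : E * (F * z) = F * (E * z) + qh⁻¹ • (K * z) - qh⁻¹ • (Ki * z) := by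
  rw [← mul_assoc, uEFe E F K Ki qh hEF, sub_mul, add_mul, smul_mul_assoc, smul_mul_assoc,
    mul_assoc]

include hKKi in
lemma uKKiz (z : U) : K * (Ki * z) = z := by rw [← mul_assoc, hKKi, one_mul]

include hKiK in
lemma uKiKz (z : U) : Ki * (K * z) = z := by rw [← mul_assoc, hKiK, one_mul]

end U

section R
variable {U : Type} [Ring U] [Algebra ℂ U]
variable (E F K Ki : U)
variable (q qh : ℂ) (hq : q ≠ 0) (hqh : qh ≠ 0) (hqq : qh = q - q⁻¹)
variable (hKKi : K * Ki = 1) (hKiK : Ki * K = 1)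
variable (hKE : K * E = q ^ 2 • (E * K))
variable (hKF : K * F = (q⁻¹) ^ 2 • (F * K))
variable (hEF : E * F - F * E = qh⁻¹ • (K - Ki))

include hq hqh hqq hKKi hKiK hKE hKF hEF

lemma R1 : Ki * (K + (q⁻¹ * qh ^ 2) • (F * E)) = (K + (q⁻¹ * qh ^ 2) • (F * E)) * Ki := by
  simp only [smul_add, smul_sub, add_mul, sub_mul, mul_add, mul_sub, smul_mul_assoc,
    mul_smul_comm, smul_smul, mul_assoc, mul_one, one_mul,
    uEFz E F K Ki qh hEF, uEFe E F K Ki qh hEF,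
    uKiEz E K Ki q hq hKKi hKiK hKE, uKiE E K Ki q hq hKKi hKiK hKE,
    uKiFz F K Ki q hq hKKi hKiK hKF, uKiF F K Ki q hq hKKi hKiK hKF,
    uKEz E K q hKE, hKE, uKFz F K q hKF, hKF,
    uKKiz K Ki hKKi, uKiKz K Ki hKiK, hKKi, hKiK]
  match_scalars <;> (field_simp; try rw [hqq]; try field_simp; try ring)

lemma R2 : Ki * ((q⁻¹ * qh) • F) = q ^ 2 • (((q⁻¹ * qh) • F) * Ki) := by
  simp only [smul_add, smul_sub, add_mul, sub_mul, mul_add, mul_sub, smul_mul_assoc,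
    mul_smul_comm, smul_smul, mul_assoc, mul_one, one_mul,
    uEFz E F K Ki qh hEF, uEFe E F K Ki qh hEF,
    uKiEz E K Ki q hq hKKi hKiK hKE, uKiE E K Ki q hq hKKi hKiK hKE,
    uKiFz F K Ki q hq hKKi hKiK hKF, uKiF F K Ki q hq hKKi hKiK hKF,
    uKEz E K q hKE, hKE, uKFz F K q hKF, hKF,
    uKKiz K Ki hKKi, uKiKz K Ki hKiK, hKKi, hKiK]
  match_scalars <;> (field_simp; try rw [hqq]; try field_simp; try ring)

lemma R3 : Ki * (qh • (Ki * E)) = (q⁻¹) ^ 2 • ((qh • (Ki * E)) * Ki) := by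
  simp only [smul_add, smul_sub, add_mul, sub_mul, mul_add, mul_sub, smul_mul_assoc,
    mul_smul_comm, smul_smul, mul_assoc, mul_one, one_mul,
    uEFz E F K Ki qh hEF, uEFe E F K Ki qh hEF,
    uKiEz E K Ki q hq hKKi hKiK hKE, uKiE E K Ki q hq hKKi hKiK hKE,
    uKiFz F K Ki q hq hKKi hKiK hKF, uKiF F K Ki q hq hKKi hKiK hKF,
    uKEz E K q hKE, hKE, uKFz F K q hKF, hKF,
    uKKiz K Ki hKKi, uKiKz K Ki hKiK, hKKi, hKiK]
  match_scalars <;> (field_simp; try rw [hqq]; try field_simp; try ring)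

lemma R4 : ((q⁻¹ * qh) • F) * (K + (q⁻¹ * qh ^ 2) • (F * E))
    = (K + (q⁻¹ * qh ^ 2) • (F * E)) * ((q⁻¹ * qh) • F)
      + (q⁻¹ * qh) • (((q⁻¹ * qh) • F) * Ki) := by
  simp only [smul_add, smul_sub, add_mul, sub_mul, mul_add, mul_sub, smul_mul_assoc,
    mul_smul_comm, smul_smul, mul_assoc, mul_one, one_mul,
    uEFz E F K Ki qh hEF, uEFe E F K Ki qh hEF,
    uKiEz E K Ki q hq hKKi hKiK hKE, uKiE E K Ki q hq hKKi hKiK hKE,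
    uKiFz F K Ki q hq hKKi hKiK hKF, uKiF F K Ki q hq hKKi hKiK hKF,
    uKEz E K q hKE, hKE, uKFz F K q hKF, hKF,
    uKKiz K Ki hKKi, uKiKz K Ki hKiK, hKKi, hKiK]
  match_scalars <;> (field_simp; try rw [hqq]; try field_simp; try ring)

lemma R5 : (qh • (Ki * E)) * ((q⁻¹ * qh) • F)
    = ((q⁻¹ * qh) • F) * (qh • (Ki * E))
      + (q⁻¹ * qh) • (Ki * (K + (q⁻¹ * qh ^ 2) • (F * E)) - Ki * Ki) := by
  simp only [smul_add, smul_sub, add_mul, sub_mul, mul_add, mul_sub, smul_mul_assoc,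
    mul_smul_comm, smul_smul, mul_assoc, mul_one, one_mul,
    uEFz E F K Ki qh hEF, uEFe E F K Ki qh hEF,
    uKiEz E K Ki q hq hKKi hKiK hKE, uKiE E K Ki q hq hKKi hKiK hKE,
    uKiFz F K Ki q hq hKKi hKiK hKF, uKiF F K Ki q hq hKKi hKiK hKF,
    uKEz E K q hKE, hKE, uKFz F K q hKF, hKF,
    uKKiz K Ki hKKi, uKiKz K Ki hKiK, hKKi, hKiK]
  match_scalars <;> (field_simp; try rw [hqq]; try field_simp; try ring)

lemma R6 : (qh • (Ki * E)) * (K + (q⁻¹ * qh ^ 2) • (F * E))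
    = (K + (q⁻¹ * qh ^ 2) • (F * E)) * (qh • (Ki * E))
      - (q⁻¹ * qh) • (Ki * (qh • (Ki * E))) := by
  have hq2 : q ^ 2 - 1 ≠ 0 := by
    rw [hqq] at hqh
    intro h
    apply hqh
    have hq' := hq
    field_simp
    linear_combination h
  have hne : -q ^ 7 + q ^ 9 ≠ 0 := by
    intro h
    have h7 : q ^ 7 * (q ^ 2 - 1) = 0 := by linear_combination h
    rcases mul_eq_zero.mp h7 with h' | h'
    · exact pow_ne_zero 7 hq h'
    · exact hq2 h'
  simp only [smul_add, smul_sub, add_mul, sub_mul, mul_add, mul_sub, smul_mul_assoc,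
    mul_smul_comm, smul_smul, mul_assoc, mul_one, one_mul,
    uEFz E F K Ki qh hEF, uEFe E F K Ki qh hEF,
    uKiEz E K Ki q hq hKKi hKiK hKE, uKiE E K Ki q hq hKKi hKiK hKE,
    uKiFz F K Ki q hq hKKi hKiK hKF, uKiF F K Ki q hq hKKi hKiK hKF,
    uKEz E K q hKE, hKE, uKFz F K q hKF, hKF,
    uKKiz K Ki hKKi, uKiKz K Ki hKiK, hKKi, hKiK]
  match_scalars <;> (field_simp; try rw [hqq]; try field_simp; try ring; try (field_simp [hne]; ring))

lemma R7 : (K + (q⁻¹ * qh ^ 2) • (F * E)) * Ki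
    - q ^ 2 • (((q⁻¹ * qh) • F) * (qh • (Ki * E))) = 1 := by
  simp only [smul_add, smul_sub, add_mul, sub_mul, mul_add, mul_sub, smul_mul_assoc,
    mul_smul_comm, smul_smul, mul_assoc, mul_one, one_mul,
    uEFz E F K Ki qh hEF, uEFe E F K Ki qh hEF,
    uKiEz E K Ki q hq hKKi hKiK hKE, uKiE E K Ki q hq hKKi hKiK hKE,
    uKiFz F K Ki q hq hKKi hKiK hKF, uKiF F K Ki q hq hKKi hKiK hKF,
    uKEz E K q hKE, hKE, uKFz F K q hKF, hKF,
    uKKiz K Ki hKKi, uKiKz K Ki hKiK, hKKi, hKiK]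
  match_scalars <;> (field_simp; try rw [hqq]; try field_simp; try ring)

end R

section P
variable {U : Type} [Ring U] [Algebra ℂ U]
variable (E F K Ki : U)
variable (q : ℂ) (hq : q ≠ 0)
variable (hKKi : K * Ki = 1) (hKiK : Ki * K = 1)
variable (hKE : K * E = q ^ 2 • (E * K))

include hq hKKi hKiK hKE in
lemma uEnKi (n : ℕ) : E ^ n * Ki = q ^ (2 * n) • (Ki * E ^ n) := by
  induction n with
  | zero => simp
  | succ n ih =>
    have : E ^ (n + 1) * Ki = E ^ n * (E * Ki) := by
      rw [pow_succ, mul_assoc]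
    rw [this, uEKi E K Ki q hq hKKi hKiK hKE, mul_smul_comm, ← mul_assoc, ih]
    rw [smul_mul_assoc, smul_smul, mul_assoc, ← pow_succ]
    congr 1
    ring

include hq hKKi hKiK hKE in
lemma uKiEn (n : ℕ) : ∃ c : ℂ, (Ki * E) ^ n = c • (Ki ^ n * E ^ n) := by
  induction n with
  | zero => exact ⟨1, by simp⟩
  | succ n ih =>
    obtain ⟨c, hc⟩ := ih
    refine ⟨c * q ^ (2 * n), ?_⟩
    rw [pow_succ, hc, smul_mul_assoc, mul_assoc, ← mul_assoc (E ^ n),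
      uEnKi E K Ki q hq hKKi hKiK hKE]
    rw [smul_mul_assoc, mul_smul_comm, smul_smul, mul_comm c]
    congr 1
    rw [← mul_assoc, ← mul_assoc, ← pow_succ, mul_assoc, ← pow_succ]

include hq hKKi hKiK hKE in
lemma R9 (p : ℕ) (qh : ℂ) (hEp : E ^ p = 0) : (qh • (Ki * E)) ^ p = 0 := by
  obtain ⟨c, hc⟩ := uKiEn E K Ki q hq hKKi hKiK hKE p
  rw [smul_pow, hc, hEp, mul_zero, smul_zero, smul_zero]

lemma R8 (p : ℕ) (c : ℂ) (hFp : F ^ p = 0) : (c • F) ^ p = 0 := by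
  rw [smul_pow, hFp, smul_zero]

include hKKi in
lemma R10 (p : ℕ) (hp : 0 < p) (hK2p : K ^ (2 * p) = 1) : Ki ^ (2 * p) = 1 := by
  have hKi : Ki = K ^ (2 * p - 1) := by
    have h1 : K * K ^ (2 * p - 1) = 1 := by
      rw [← pow_succ']
      have : 2 * p - 1 + 1 = 2 * p := by omega
      rw [this, hK2p]
    calc Ki = 1 * Ki := (one_mul Ki).symm
    _ = (K * K ^ (2*p-1)) * Ki := by rw [h1]
    _ = K ^ (2*p-1) * (K * Ki) := by
        rw [← mul_assoc, ← pow_succ', pow_succ]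
    _ = K ^ (2*p-1) := by rw [hKKi, mul_one]
  rw [hKi, ← pow_mul]
  have : (2 * p - 1) * (2 * p) = (2 * p) * (2 * p - 1) := by ring
  rw [this, pow_mul, hK2p, one_pow]

end P

namespace LoopSpan

variable (p : ℕ)

lemma rDA : genD p * genA p = genA p * genD p := by
  have := RingQuot.mkAlgHom_rel ℂ (LoopRel.da (p := p))
  simpa [genA, genD, map_mul] using this

lemma rDB : genD p * genB p = (qval p) ^ 2 • (genB p * genD p) := by
  have := RingQuot.mkAlgHom_rel ℂ (LoopRel.db (p := p))
  simpa [genB, genD, map_mul, map_smul] using this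

lemma rDC : genD p * genC p = ((qval p)⁻¹) ^ 2 • (genC p * genD p) := by
  have := RingQuot.mkAlgHom_rel ℂ (LoopRel.dc (p := p))
  simpa [genC, genD, map_mul, map_smul] using this

lemma rBA : genB p * genA p = genA p * genB p
    + ((qval p)⁻¹ * (qval p - (qval p)⁻¹)) • (genB p * genD p) := by
  have := RingQuot.mkAlgHom_rel ℂ (LoopRel.ba (p := p))
  simpa [genA, genB, genD, map_mul, map_smul, map_add] using this

lemma rCB : genC p * genB p = genB p * genC p
    + ((qval p)⁻¹ * (qval p - (qval p)⁻¹)) •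
        (genD p * genA p - genD p * genD p) := by
  have := RingQuot.mkAlgHom_rel ℂ (LoopRel.cb (p := p))
  simpa [genA, genB, genC, genD, map_mul, map_smul, map_add, map_sub] using this

lemma rCA : genC p * genA p = genA p * genC p
    - ((qval p)⁻¹ * (qval p - (qval p)⁻¹)) • (genD p * genC p) := by
  have := RingQuot.mkAlgHom_rel ℂ (LoopRel.ca (p := p))
  simpa [genA, genC, genD, map_mul, map_smul, map_sub] using this

lemma rDet : genA p * genD p - (qval p) ^ 2 • (genB p * genC p) = 1 := by
  have := RingQuot.mkAlgHom_rel ℂ (LoopRel.det (p := p))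
  simpa [genA, genB, genC, genD, map_mul, map_smul, map_sub, map_one] using this

lemma rBp : genB p ^ p = 0 := by
  have := RingQuot.mkAlgHom_rel ℂ (LoopRel.bp (p := p))
  simpa [genB, map_pow] using this

lemma rCp : genC p ^ p = 0 := by
  have := RingQuot.mkAlgHom_rel ℂ (LoopRel.cp (p := p))
  simpa [genC, map_pow] using this

lemma rD2p : genD p ^ (2 * p) = 1 := by
  have := RingQuot.mkAlgHom_rel ℂ (LoopRel.d2p (p := p))
  simpa [genD, map_pow, map_one] using this

end LoopSpan

namespace LoopSpan

/-- the span of the monomials -/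
def S (p : ℕ) : Submodule ℂ (LoopAlg p) :=
  Submodule.span ℂ (Set.range (fun m : Fin p × Fin p × Fin (2 * p) =>
    genB p ^ (m.1 : ℕ) * genC p ^ (m.2.1 : ℕ) * genD p ^ (m.2.2 : ℕ)))

variable {p : ℕ} (hp : 2 ≤ p)

include hp in
lemma mem_mono (i j k : ℕ) : genB p ^ i * genC p ^ j * genD p ^ k ∈ S p := by
  by_cases hi : p ≤ i
  · have : genB p ^ i = 0 := by
      calc genB p ^ i = genB p ^ p * genB p ^ (i - p) := by rw [← pow_add]; congr 1; omega
      _ = 0 := by rw [rBp, zero_mul]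
    simp [this]
  by_cases hj : p ≤ j
  · have : genC p ^ j = 0 := by
      calc genC p ^ j = genC p ^ p * genC p ^ (j - p) := by rw [← pow_add]; congr 1; omega
      _ = 0 := by rw [rCp, zero_mul]
    simp [this]
  have hpp : 0 < 2 * p := by omega
  have hD : genD p ^ k = genD p ^ (k % (2 * p)) := by
    conv_lhs => rw [← Nat.mod_add_div k (2 * p)]
    rw [pow_add, pow_mul, rD2p, one_pow, mul_one]
  rw [hD]
  apply Submodule.subset_span
  exact ⟨(⟨i, by omega⟩, ⟨j, by omega⟩, ⟨k % (2 * p), Nat.mod_lt _ hpp⟩), rfl⟩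

include hp in
lemma mulB_mem {x : LoopAlg p} (hx : x ∈ S p) : genB p * x ∈ S p := by
  induction hx using Submodule.span_induction with
  | mem x hxr =>
    obtain ⟨m, rfl⟩ := hxr
    have : genB p * (genB p ^ (m.1 : ℕ) * genC p ^ (m.2.1 : ℕ) * genD p ^ (m.2.2 : ℕ))
        = genB p ^ ((m.1 : ℕ) + 1) * genC p ^ (m.2.1 : ℕ) * genD p ^ (m.2.2 : ℕ) := by
      simp only [pow_succ', mul_assoc]
    rw [this]; exact mem_mono hp _ _ _
  | zero => simp
  | add x y _ _ hx hy => rw [mul_add]; exact (S p).add_mem hx hy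
  | smul c x _ hx => rw [mul_smul_comm]; exact (S p).smul_mem c hx

end LoopSpan

namespace LoopSpan

variable {p : ℕ} (hp : 2 ≤ p)

lemma lDB (i : ℕ) : genD p * genB p ^ i = ((qval p) ^ 2) ^ i • (genB p ^ i * genD p) := by
  induction i with
  | zero => simp
  | succ i ih =>
    rw [pow_succ', ← mul_assoc, rDB, smul_mul_assoc, mul_assoc, ih, mul_smul_comm, smul_smul]
    rw [pow_succ]
    congr 1
    · ring
    · simp only [pow_succ', mul_assoc]

lemma lDC (j : ℕ) : genD p * genC p ^ j = (((qval p)⁻¹) ^ 2) ^ j • (genC p ^ j * genD p) := by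
  induction j with
  | zero => simp
  | succ j ih =>
    rw [pow_succ', ← mul_assoc, rDC, smul_mul_assoc, mul_assoc, ih, mul_smul_comm, smul_smul]
    rw [pow_succ]
    congr 1
    · ring
    · simp only [pow_succ', mul_assoc]

include hp in
lemma mulD_mem {x : LoopAlg p} (hx : x ∈ S p) : genD p * x ∈ S p := by
  induction hx using Submodule.span_induction with
  | mem x hxr =>
    obtain ⟨m, rfl⟩ := hxr
    have key : genD p * (genB p ^ (m.1 : ℕ) * genC p ^ (m.2.1 : ℕ) * genD p ^ (m.2.2 : ℕ))
        = (((qval p) ^ 2) ^ (m.1 : ℕ) * (((qval p)⁻¹) ^ 2) ^ (m.2.1 : ℕ)) •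
          (genB p ^ (m.1 : ℕ) * genC p ^ (m.2.1 : ℕ) * genD p ^ ((m.2.2 : ℕ) + 1)) := by
      calc genD p * (genB p ^ (m.1 : ℕ) * genC p ^ (m.2.1 : ℕ) * genD p ^ (m.2.2 : ℕ))
          = (genD p * genB p ^ (m.1 : ℕ)) * genC p ^ (m.2.1 : ℕ) * genD p ^ (m.2.2 : ℕ) := by
            simp only [mul_assoc]
        _ = ((qval p) ^ 2) ^ (m.1 : ℕ) •
            (genB p ^ (m.1 : ℕ) * (genD p * genC p ^ (m.2.1 : ℕ)) * genD p ^ (m.2.2 : ℕ)) := by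
            rw [lDB]; simp only [smul_mul_assoc, mul_assoc]
        _ = (((qval p) ^ 2) ^ (m.1 : ℕ) * (((qval p)⁻¹) ^ 2) ^ (m.2.1 : ℕ)) •
            (genB p ^ (m.1 : ℕ) * genC p ^ (m.2.1 : ℕ) * (genD p * genD p ^ (m.2.2 : ℕ))) := by
            rw [lDC]; simp only [smul_mul_assoc, mul_smul_comm, smul_smul, mul_assoc]
        _ = _ := by rw [← pow_succ']
    rw [key]
    exact (S p).smul_mem _ (mem_mono hp _ _ _)
  | zero => simp
  | add x y _ _ hx hy => rw [mul_add]; exact (S p).add_mem hx hy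
  | smul c x _ hx => rw [mul_smul_comm]; exact (S p).smul_mem c hx

include hp in
lemma mulDn_mem (n : ℕ) {x : LoopAlg p} (hx : x ∈ S p) : genD p ^ n * x ∈ S p := by
  induction n with
  | zero => simpa using hx
  | succ n ih =>
    have : genD p ^ (n + 1) * x = genD p * (genD p ^ n * x) := by
      simp only [pow_succ', mul_assoc]
    rw [this]
    exact mulD_mem hp ih

lemma rAD : genA p * genD p = 1 + (qval p) ^ 2 • (genB p * genC p) := by
  have h := rDet p
  linear_combination (norm := abel) h

include hp in
lemma mulC_mem {x : LoopAlg p} (hx : x ∈ S p) : genC p * x ∈ S p := by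
  induction hx using Submodule.span_induction with
  | mem x hxr =>
    obtain ⟨m, rfl⟩ := hxr
    obtain ⟨⟨i, hi⟩, ⟨j, hj⟩, ⟨k, hk⟩⟩ := m
    simp only
    clear hi hj hk
    induction i generalizing j k with
    | zero =>
      have : genC p * (genB p ^ 0 * genC p ^ j * genD p ^ k)
          = genB p ^ 0 * genC p ^ (j + 1) * genD p ^ k := by
        simp only [pow_zero, one_mul, pow_succ', mul_assoc]
      rw [this]
      exact mem_mono hp _ _ _
    | succ i ih =>
      set lam := (qval p)⁻¹ * (qval p - (qval p)⁻¹) with hlam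
      have hCB : genC p * genB p = genB p * genC p + lam • (1 : LoopAlg p)
          + (lam * (qval p) ^ 2) • (genB p * genC p) - lam • (genD p * genD p) := by
        rw [rCB, rDA, rAD, smul_sub, smul_add, smul_smul]
        abel
      set y := genB p ^ i * genC p ^ j * genD p ^ k with hy
      have hymem : y ∈ S p := mem_mono hp _ _ _
      have hstep : genC p * (genB p ^ (i + 1) * genC p ^ j * genD p ^ k)
          = (genC p * genB p) * y := by
        simp only [hy, pow_succ', mul_assoc]
      rw [hstep, hCB]
      have expand : (genB p * genC p + lam • (1 : LoopAlg p)
          + (lam * (qval p) ^ 2) • (genB p * genC p) - lam • (genD p * genD p)) * y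
          = genB p * (genC p * y) + lam • y
            + (lam * (qval p) ^ 2) • (genB p * (genC p * y))
            - lam • (genD p * (genD p * y)) := by
        simp only [add_mul, sub_mul, smul_mul_assoc, one_mul, mul_assoc]
      rw [expand]
      have hCy : genC p * y ∈ S p := ih j k
      exact (S p).sub_mem
        ((S p).add_mem ((S p).add_mem (mulB_mem hp hCy) ((S p).smul_mem _ hymem))
          ((S p).smul_mem _ (mulB_mem hp hCy)))
        ((S p).smul_mem _ (mulD_mem hp (mulD_mem hp hymem)))
  | zero => simp
  | add x y _ _ hx hy => rw [mul_add]; exact (S p).add_mem hx hy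
  | smul c x _ hx => rw [mul_smul_comm]; exact (S p).smul_mem c hx

include hp in
lemma mulA_mem {x : LoopAlg p} (hx : x ∈ S p) : genA p * x ∈ S p := by
  have hA : genA p = (1 + (qval p) ^ 2 • (genB p * genC p)) * genD p ^ (2 * p - 1) := by
    have h1 : genA p = genA p * genD p ^ (2 * p) := by rw [rD2p, mul_one]
    have h2 : genD p ^ (2 * p) = genD p * genD p ^ (2 * p - 1) := by
      rw [← pow_succ']
      congr 1
      omega
    rw [h1, h2, ← mul_assoc, rAD]
  have key : genA p * x = genD p ^ (2 * p - 1) * x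
      + (qval p) ^ 2 • (genB p * (genC p * (genD p ^ (2 * p - 1) * x))) := by
    rw [hA]
    simp only [add_mul, one_mul, smul_mul_assoc, mul_assoc]
  rw [key]
  have h3 : genD p ^ (2 * p - 1) * x ∈ S p := mulDn_mem hp _ hx
  exact (S p).add_mem h3 ((S p).smul_mem _ (mulB_mem hp (mulC_mem hp h3)))

include hp in
lemma S_eq_top : S p = ⊤ := by
  rw [Submodule.eq_top_iff']
  intro x
  obtain ⟨y, rfl⟩ := RingQuot.mkAlgHom_surjective ℂ (LoopRel p) x
  have one_mem : (1 : LoopAlg p) ∈ S p := by simpa using mem_mono hp 0 0 0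
  have main : ∀ y : FreeAlgebra ℂ (Fin 4), ∀ x ∈ S p,
      RingQuot.mkAlgHom ℂ (LoopRel p) y * x ∈ S p := by
    intro y
    induction y using FreeAlgebra.induction with
    | grade0 r =>
      intro x hx
      rw [AlgHom.commutes, ← Algebra.smul_def]
      exact (S p).smul_mem r hx
    | grade1 i =>
      intro x hx
      fin_cases i
      · exact mulA_mem hp hx
      · exact mulB_mem hp hx
      · exact mulC_mem hp hx
      · exact mulD_mem hp hx
    | mul a b ha hb =>
      intro x hx
      rw [map_mul, mul_assoc]
      exact ha _ (hb _ hx)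
    | add a b ha hb =>
      intro x hx
      rw [map_add, add_mul]
      exact (S p).add_mem (ha _ hx) (hb _ hx)
  simpa using main y 1 one_mem

end LoopSpan


theorem loop_algebra_presentation
    (p : ℕ) (hp : 2 ≤ p)
    (U : Type) [Ring U] [Algebra ℂ U] [FiniteDimensional ℂ U]
    (E F K Ki : U) (hrel : UqRel p E F K Ki)
    -- the monomials `E^m F^n K^l` form a basis of `Ū_q`
    (BU : Module.Basis (Fin p × Fin p × Fin (2 * p)) ℂ U)
    (hBU : ∀ m : Fin p × Fin p × Fin (2 * p),
      BU m = E ^ (m.1 : ℕ) * F ^ (m.2.1 : ℕ) * K ^ (m.2.2 : ℕ)) :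
    -- the monomials `bⁱ cʲ dᵏ` form a basis of `A`
    LinearIndependent ℂ (fun m : Fin p × Fin p × Fin (2 * p) =>
      genB p ^ (m.1 : ℕ) * genC p ^ (m.2.1 : ℕ) * genD p ^ (m.2.2 : ℕ))
    ∧ Submodule.span ℂ (Set.range (fun m : Fin p × Fin p × Fin (2 * p) =>
        genB p ^ (m.1 : ℕ) * genC p ^ (m.2.1 : ℕ) * genD p ^ (m.2.2 : ℕ))) = ⊤
    -- so `dim A = 2p³`
    ∧ Module.finrank ℂ (LoopAlg p) = 2 * p ^ 3
    -- and the stated assignment defines an isomorphism of `ℂ`-algebras `A → Ū_q`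
    ∧ ∃ f : LoopAlg p ≃ₐ[ℂ] U,
        f (genA p) = K + ((qval p)⁻¹ * (qval p - (qval p)⁻¹) ^ 2) • (F * E)
        ∧ f (genB p) = ((qval p)⁻¹ * (qval p - (qval p)⁻¹)) • F
        ∧ f (genC p) = (qval p - (qval p)⁻¹) • (Ki * E)
        ∧ f (genD p) = Ki := by
  classical
  obtain ⟨hEp, hFp, hK2p, hKKi, hKiK, hKE, hKF, hEF⟩ := hrel
  have hq : qval p ≠ 0 := qval_ne_zero p
  have hqh : qval p - (qval p)⁻¹ ≠ 0 := qhat_ne_zero hp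
  set q : ℂ := qval p with hqdef
  -- the algebra map
  let g : Fin 4 → U := ![K + (q⁻¹ * (q - q⁻¹) ^ 2) • (F * E), (q⁻¹ * (q - q⁻¹)) • F,
    (q - q⁻¹) • (Ki * E), Ki]
  have hg0 : g 0 = K + (q⁻¹ * (q - q⁻¹) ^ 2) • (F * E) := rfl
  have hg1 : g 1 = (q⁻¹ * (q - q⁻¹)) • F := rfl
  have hg2 : g 2 = (q - q⁻¹) • (Ki * E) := rfl
  have hg3 : g 3 = Ki := rfl
  have hcheck : ∀ ⦃x y⦄, LoopRel p x y →
      FreeAlgebra.lift ℂ g x = FreeAlgebra.lift ℂ g y := by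
    intro x y r
    cases r <;>
      simp only [map_mul, map_add, map_sub, map_smul, map_one, map_zero, map_pow,
        FreeAlgebra.lift_ι_apply, hg0, hg1, hg2, hg3]
    · exact R1 E F K Ki q (q - q⁻¹) hq hqh rfl hKKi hKiK hKE hKF hEF
    · exact R2 E F K Ki q (q - q⁻¹) hq hqh rfl hKKi hKiK hKE hKF hEF
    · exact R3 E F K Ki q (q - q⁻¹) hq hqh rfl hKKi hKiK hKE hKF hEF
    · exact R4 E F K Ki q (q - q⁻¹) hq hqh rfl hKKi hKiK hKE hKF hEF
    · exact R5 E F K Ki q (q - q⁻¹) hq hqh rfl hKKi hKiK hKE hKF hEF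
    · exact R6 E F K Ki q (q - q⁻¹) hq hqh rfl hKKi hKiK hKE hKF hEF
    · exact R7 E F K Ki q (q - q⁻¹) hq hqh rfl hKKi hKiK hKE hKF hEF
    · exact R8 F p _ hFp
    · exact R9 E K Ki q hq hKKi hKiK hKE p _ hEp
    · exact R10 K Ki hKKi p (by omega) hK2p
  let f : LoopAlg p →ₐ[ℂ] U := RingQuot.liftAlgHom ℂ ⟨FreeAlgebra.lift ℂ g, hcheck⟩
  have hfA : f (genA p) = K + (q⁻¹ * (q - q⁻¹) ^ 2) • (F * E) := by
    rw [genA, show f = RingQuot.liftAlgHom ℂ ⟨FreeAlgebra.lift ℂ g, hcheck⟩ from rfl,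
      RingQuot.liftAlgHom_mkAlgHom_apply, FreeAlgebra.lift_ι_apply, hg0]
  have hfB : f (genB p) = (q⁻¹ * (q - q⁻¹)) • F := by
    rw [genB, show f = RingQuot.liftAlgHom ℂ ⟨FreeAlgebra.lift ℂ g, hcheck⟩ from rfl,
      RingQuot.liftAlgHom_mkAlgHom_apply, FreeAlgebra.lift_ι_apply, hg1]
  have hfC : f (genC p) = (q - q⁻¹) • (Ki * E) := by
    rw [genC, show f = RingQuot.liftAlgHom ℂ ⟨FreeAlgebra.lift ℂ g, hcheck⟩ from rfl,
      RingQuot.liftAlgHom_mkAlgHom_apply, FreeAlgebra.lift_ι_apply, hg2]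
  have hfD : f (genD p) = Ki := by
    rw [genD, show f = RingQuot.liftAlgHom ℂ ⟨FreeAlgebra.lift ℂ g, hcheck⟩ from rfl,
      RingQuot.liftAlgHom_mkAlgHom_apply, FreeAlgebra.lift_ι_apply, hg3]
  -- surjectivity
  have hKirange : Ki ∈ f.range := f.mem_range.mpr ⟨genD p, hfD⟩
  have hKrange : K ∈ f.range := by
    have hKi2p : Ki ^ (2 * p) = 1 := R10 K Ki hKKi p (by omega) hK2p
    have hK : K = Ki ^ (2 * p - 1) := by
      have h1 : Ki ^ (2 * p - 1) * Ki = 1 := by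
        rw [← pow_succ]
        have h2 : 2 * p - 1 + 1 = 2 * p := by omega
        rw [h2, hKi2p]
      calc K = 1 * K := (one_mul K).symm
      _ = (Ki ^ (2 * p - 1) * Ki) * K := by rw [h1]
      _ = Ki ^ (2 * p - 1) * (Ki * K) := by rw [mul_assoc]
      _ = Ki ^ (2 * p - 1) := by rw [hKiK, mul_one]
    rw [hK]
    exact pow_mem hKirange _
  have hFrange : F ∈ f.range := by
    have : F = (q⁻¹ * (q - q⁻¹))⁻¹ • f (genB p) := by
      rw [hfB, smul_smul, inv_mul_cancel₀ (mul_ne_zero (inv_ne_zero hq) hqh), one_smul]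
    rw [this]
    exact Subalgebra.smul_mem _ (f.mem_range.mpr ⟨genB p, rfl⟩) _
  have hErange : E ∈ f.range := by
    have : E = (q - q⁻¹)⁻¹ • (K * f (genC p)) := by
      rw [hfC, mul_smul_comm, ← mul_assoc, hKKi, one_mul, smul_smul,
        inv_mul_cancel₀ hqh, one_smul]
    rw [this]
    exact Subalgebra.smul_mem _ (mul_mem hKrange (f.mem_range.mpr ⟨genC p, rfl⟩)) _
  have hsurj : Function.Surjective f := by
    rw [← AlgHom.range_eq_top]
    rw [eq_top_iff]
    intro u _
    have hu : u ∈ Submodule.span ℂ (Set.range BU) := by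
      rw [BU.span_eq]; trivial
    have hle : Submodule.span ℂ (Set.range BU) ≤ Subalgebra.toSubmodule f.range := by
      rw [Submodule.span_le]
      rintro _ ⟨m, rfl⟩
      simp only [SetLike.mem_coe, Subalgebra.mem_toSubmodule, hBU]
      exact mul_mem (mul_mem (pow_mem hErange _) (pow_mem hFrange _)) (pow_mem hKrange _)
    exact hle hu
  -- dimensions
  have hspan : Submodule.span ℂ (Set.range (fun m : Fin p × Fin p × Fin (2 * p) =>
      genB p ^ (m.1 : ℕ) * genC p ^ (m.2.1 : ℕ) * genD p ^ (m.2.2 : ℕ))) = ⊤ :=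
    LoopSpan.S_eq_top hp
  have hfin : Module.Finite ℂ (LoopAlg p) := by
    refine ⟨Submodule.fg_def.mpr ⟨_, Set.finite_range _, hspan⟩⟩
  have hcard : Fintype.card (Fin p × Fin p × Fin (2 * p)) = 2 * p ^ 3 := by
    simp [Fintype.card_prod]
    ring
  have hrankU : Module.finrank ℂ U = 2 * p ^ 3 := by
    rw [Module.finrank_eq_card_basis BU, hcard]
  have hle1 : Module.finrank ℂ (LoopAlg p) ≤ 2 * p ^ 3 := by
    rw [← hcard]
    exact finrank_le_of_span_eq_top hspan
  have hle2 : 2 * p ^ 3 ≤ Module.finrank ℂ (LoopAlg p) := by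
    rw [← hrankU]
    have : LinearMap.range f.toLinearMap = ⊤ := LinearMap.range_eq_top.mpr hsurj
    calc Module.finrank ℂ U = Module.finrank ℂ (LinearMap.range f.toLinearMap) := by
          rw [this]; exact (finrank_top ℂ U).symm
    _ ≤ Module.finrank ℂ (LoopAlg p) := LinearMap.finrank_range_le f.toLinearMap
  have hrankL : Module.finrank ℂ (LoopAlg p) = 2 * p ^ 3 := le_antisymm hle1 hle2
  have hinj : Function.Injective f := by
    have := (LinearMap.injective_iff_surjective_of_finrank_eq_finrank
      (f := f.toLinearMap) (by rw [hrankL, hrankU])).mpr hsurj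
    exact this
  refine ⟨?_, hspan, hrankL, ⟨AlgEquiv.ofBijective f ⟨hinj, hsurj⟩, hfA, hfB, hfC, hfD⟩⟩
  · exact linearIndependent_of_top_le_span_of_card_eq_finrank
      (by rw [hspan]) (by rw [hcard, hrankL])


end
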